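/- arXiv:2412.18193 — 4 statements merged into one kernel-verified Lean document; each statement's English description precedes it below -/
import Mathlib

section
/- For every integer n ≥ 2 there is a constant C = C(n) > 0 such that for every integer 1 ≤ k ≤ n−1 and all k-dimensional linear subspaces U, V of ℝⁿ, there exists an orthogonal linear map R : ℝⁿ → ℝⁿ (a surjective linear isometry) with R(U) = V such that ‖b − R(b)‖ ≤ C·‖b‖·‖π_U − π_V‖_op for all b ∈ U. -/
open Set

/-- The orthogonal projection of `ℝⁿ` onto a subspace `U`, as a continuous linear map
`ℝⁿ → ℝⁿ`. -/
noncomputable def projCLM {n : ℕ} (U : Submodule ℝ (EuclideanSpace ℝ (Fin n))) :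
    EuclideanSpace ℝ (Fin n) →L[ℝ] EuclideanSpace ℝ (Fin n) :=
  U.subtypeL.comp (U.orthogonalProjectionOnto)

open Module Finset

local notation "⟪" x ", " y "⟫" => @inner ℝ _ _ x y

section AuxRot

variable {n : ℕ}

private lemma projCLM_apply (U : Submodule ℝ (EuclideanSpace ℝ (Fin n)))
    (x : EuclideanSpace ℝ (Fin n)) :
    projCLM U x = (U.orthogonalProjectionOnto x : EuclideanSpace ℝ (Fin n)) := rfl

private lemma inner_oPO_left_eq_right (K : Submodule ℝ (EuclideanSpace ℝ (Fin n)))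
    (u v : EuclideanSpace ℝ (Fin n)) :
    ⟪(K.orthogonalProjectionOnto u : EuclideanSpace ℝ (Fin n)), v⟫ =
      ⟪u, (K.orthogonalProjectionOnto v : EuclideanSpace ℝ (Fin n))⟫ :=
  K.inner_starProjection_left_eq_right u v

/-- Coercion of an orthonormal family in a submodule is orthonormal in the ambient space. -/
private lemma orthonormal_coe {ι : Type*} {U : Submodule ℝ (EuclideanSpace ℝ (Fin n))}
    {v : ι → U} (hv : Orthonormal ℝ v) :
    Orthonormal ℝ (fun i => (v i : EuclideanSpace ℝ (Fin n))) := by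
  classical
  rw [orthonormal_iff_ite] at hv ⊢
  intro i j
  rw [← Submodule.coe_inner]
  exact hv i j

/-- Given orthonormal families of equal (full) size inside `U` and `V`, there is a global
isometry mapping `U` onto `V` carrying one family to the other. -/
private lemma aux_exists_isometry (k : ℕ) (hk : k ≤ n)
    (U V : Submodule ℝ (EuclideanSpace ℝ (Fin n)))
    (hU : Module.finrank ℝ U = k) (hV : Module.finrank ℝ V = k)
    (e f : Fin k → EuclideanSpace ℝ (Fin n))
    (he : Orthonormal ℝ e) (hf : Orthonormal ℝ f)
    (heU : ∀ i, e i ∈ U) (hfV : ∀ i, f i ∈ V) :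
    ∃ R : EuclideanSpace ℝ (Fin n) ≃ₗᵢ[ℝ] EuclideanSpace ℝ (Fin n),
      U.map R.toLinearEquiv.toLinearMap = V ∧ ∀ i, R (e i) = f i := by
  classical
  have hEdim : finrank ℝ (EuclideanSpace ℝ (Fin n)) = n := finrank_euclideanSpace_fin
  have hcard : Fintype.card (Fin k ⊕ Fin (n - k)) = n := by
    simp [Fintype.card_sum]; omega
  -- orthonormal bases of the orthogonal complements
  have hUperp : finrank ℝ ↥Uᗮ = n - k := by
    have := Submodule.finrank_add_finrank_orthogonal (K := U)
    rw [hU, hEdim] at this; omega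
  have hVperp : finrank ℝ ↥Vᗮ = n - k := by
    have := Submodule.finrank_add_finrank_orthogonal (K := V)
    rw [hV, hEdim] at this; omega
  let bUp : OrthonormalBasis (Fin (n - k)) ℝ ↥Uᗮ :=
    (stdOrthonormalBasis ℝ ↥Uᗮ).reindex (finCongr hUperp)
  let bVp : OrthonormalBasis (Fin (n - k)) ℝ ↥Vᗮ :=
    (stdOrthonormalBasis ℝ ↥Vᗮ).reindex (finCongr hVperp)
  -- combined families
  let eF : Fin k ⊕ Fin (n - k) → EuclideanSpace ℝ (Fin n) :=
    Sum.elim e fun i => (bUp i : EuclideanSpace ℝ (Fin n))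
  let fF : Fin k ⊕ Fin (n - k) → EuclideanSpace ℝ (Fin n) :=
    Sum.elim f fun i => (bVp i : EuclideanSpace ℝ (Fin n))
  have honF : ∀ (W : Submodule ℝ (EuclideanSpace ℝ (Fin n)))
      (g : Fin k → EuclideanSpace ℝ (Fin n)) (bp : OrthonormalBasis (Fin (n - k)) ℝ ↥Wᗮ),
      Orthonormal ℝ g → (∀ i, g i ∈ W) →
      Orthonormal ℝ (Sum.elim g fun i => (bp i : EuclideanSpace ℝ (Fin n))) := by
    intro W g bp hg hgW
    have hbp := orthonormal_coe (n := n) bp.orthonormal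
    rw [orthonormal_iff_ite] at hg hbp ⊢
    rintro (i | i) (j | j)
    · simpa using hg i j
    · simp only [Sum.elim_inl, Sum.elim_inr]
      rw [Submodule.inner_right_of_mem_orthogonal (hgW i) (Submodule.coe_mem (bp j))]
      simp
    · simp only [Sum.elim_inl, Sum.elim_inr]
      rw [real_inner_comm,
        Submodule.inner_right_of_mem_orthogonal (hgW j) (Submodule.coe_mem (bp i))]
      simp
    · simpa using hbp i j
  have heF : Orthonormal ℝ eF := honF U e bUp he heU
  have hfF : Orthonormal ℝ fF := honF V f bVp hf hfV
  have hspanE : ⊤ ≤ Submodule.span ℝ (Set.range eF) := by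
    refine le_of_eq (Submodule.eq_of_le_of_finrank_le le_top ?_).symm
    rw [finrank_top, hEdim, finrank_span_eq_card heF.linearIndependent, hcard]
  have hspanF : ⊤ ≤ Submodule.span ℝ (Set.range fF) := by
    refine le_of_eq (Submodule.eq_of_le_of_finrank_le le_top ?_).symm
    rw [finrank_top, hEdim, finrank_span_eq_card hfF.linearIndependent, hcard]
  let bE : OrthonormalBasis (Fin k ⊕ Fin (n - k)) ℝ (EuclideanSpace ℝ (Fin n)) :=
    OrthonormalBasis.mk heF hspanE
  let bF : OrthonormalBasis (Fin k ⊕ Fin (n - k)) ℝ (EuclideanSpace ℝ (Fin n)) :=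
    OrthonormalBasis.mk hfF hspanF
  let R := bE.repr.trans bF.repr.symm
  have hRapp : ∀ j, R (eF j) = fF j := by
    intro j
    have h1 : bE j = eF j := by simp [bE, OrthonormalBasis.coe_mk]
    have h2 : bF j = fF j := by simp [bF, OrthonormalBasis.coe_mk]
    have : R (bE j) = bF j := by
      simp [R, LinearIsometryEquiv.trans_apply, OrthonormalBasis.repr_self,
        OrthonormalBasis.repr_symm_single]
    rwa [h1, h2] at this
  refine ⟨R, ?_, fun i => hRapp (Sum.inl i)⟩
  -- spans
  have hspanU : Submodule.span ℝ (Set.range e) = U := by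
    have hle : Submodule.span ℝ (Set.range e) ≤ U :=
      Submodule.span_le.2 (Set.range_subset_iff.2 heU)
    refine Submodule.eq_of_le_of_finrank_le hle ?_
    rw [hU, finrank_span_eq_card he.linearIndependent, Fintype.card_fin]
  have hspanV : Submodule.span ℝ (Set.range f) = V := by
    have hle : Submodule.span ℝ (Set.range f) ≤ V :=
      Submodule.span_le.2 (Set.range_subset_iff.2 hfV)
    refine Submodule.eq_of_le_of_finrank_le hle ?_
    rw [hV, finrank_span_eq_card hf.linearIndependent, Fintype.card_fin]
  have hcomp : ∀ i, R.toLinearEquiv (e i) = f i := fun i => hRapp (Sum.inl i)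
  rw [← hspanU, ← hspanV, Submodule.map_span, ← Set.range_comp]
  rw [show ⇑(R.toLinearEquiv : EuclideanSpace ℝ (Fin n) →ₗ[ℝ] EuclideanSpace ℝ (Fin n)) ∘ e = f from funext hcomp]

/-- The quantitative bound, given pointwise closeness of the two families. -/
private lemma aux_bound (k : ℕ) (U : Submodule ℝ (EuclideanSpace ℝ (Fin n)))
    (eU : OrthonormalBasis (Fin k) ℝ U)
    (f : Fin k → EuclideanSpace ℝ (Fin n))
    (R : EuclideanSpace ℝ (Fin n) ≃ₗᵢ[ℝ] EuclideanSpace ℝ (Fin n))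
    (hR : ∀ i, R (eU i : EuclideanSpace ℝ (Fin n)) = f i)
    (D : ℝ) (hD : ∀ i, ‖(eU i : EuclideanSpace ℝ (Fin n)) - f i‖ ≤ D)
    (b : EuclideanSpace ℝ (Fin n)) (hb : b ∈ U) :
    ‖b - R b‖ ≤ k * D * ‖b‖ := by
  classical
  set b' : U := ⟨b, hb⟩ with hb'
  have hrepr : (∑ i, ⟪eU i, b'⟫ • eU i) = b' := eU.sum_repr' b'
  have hreprE : (∑ i, ⟪eU i, b'⟫ • (eU i : EuclideanSpace ℝ (Fin n))) = b := by
    have := congrArg (Submodule.subtype U) hrepr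
    simpa [map_sum] using this
  have hRb : R b = ∑ i, ⟪eU i, b'⟫ • f i := by
    rw [← hreprE, map_sum]
    simp [hR]
  have hdiff : b - R b = ∑ i, ⟪eU i, b'⟫ • ((eU i : EuclideanSpace ℝ (Fin n)) - f i) := by
    rw [hRb, ← hreprE, ← Finset.sum_sub_distrib]
    simp [smul_sub]
  rw [hdiff]
  calc ‖∑ i, ⟪eU i, b'⟫ • ((eU i : EuclideanSpace ℝ (Fin n)) - f i)‖
      ≤ ∑ i, ‖⟪eU i, b'⟫ • ((eU i : EuclideanSpace ℝ (Fin n)) - f i)‖ :=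
        norm_sum_le _ _
    _ ≤ ∑ _i : Fin k, ‖b‖ * D := by
        refine Finset.sum_le_sum fun i _ => ?_
        rw [norm_smul, Real.norm_eq_abs]
        refine mul_le_mul ?_ (hD i) (norm_nonneg _) (norm_nonneg b)
        have h1 : ⟪eU i, b'⟫ = ⟪(eU i : EuclideanSpace ℝ (Fin n)), b⟫ := by
          rw [Submodule.coe_inner]
        rw [h1]
        calc |⟪(eU i : EuclideanSpace ℝ (Fin n)), b⟫|
            ≤ ‖(eU i : EuclideanSpace ℝ (Fin n))‖ * ‖b‖ := abs_real_inner_le_norm _ _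
          _ = ‖b‖ := by
              have : ‖(eU i : EuclideanSpace ℝ (Fin n))‖ = 1 := by
                have := eU.orthonormal.1 i
                exact this
              rw [this, one_mul]
    _ = k * D * ‖b‖ := by
        rw [Finset.sum_const, Finset.card_univ, Fintype.card_fin]
        ring

end AuxRot

set_option maxHeartbeats 1000000 in
/-- **Lemma 2.4.** For every `n ≥ 2` there is a constant `C = C(n) > 0` such that for every
`1 ≤ k ≤ n - 1` and all `k`-dimensional subspaces `U, V` of `ℝⁿ` there is an orthogonal
linear map `R : ℝⁿ → ℝⁿ` (a surjective linear isometry) with `R(U) = V` and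
`‖b - R(b)‖ ≤ C·‖b‖·‖π_U - π_V‖` for all `b ∈ U`. -/
theorem exists_rotation_of_subspaces
    (n : ℕ) (hn : 2 ≤ n) :
    ∃ C : ℝ, 0 < C ∧
      ∀ k : ℕ, 1 ≤ k → k ≤ n - 1 →
        ∀ U V : Submodule ℝ (EuclideanSpace ℝ (Fin n)),
          Module.finrank ℝ U = k → Module.finrank ℝ V = k →
          ∃ R : EuclideanSpace ℝ (Fin n) ≃ₗᵢ[ℝ] EuclideanSpace ℝ (Fin n),
            U.map R.toLinearEquiv.toLinearMap = V ∧
            ∀ b ∈ U, ‖b - R b‖ ≤ C * ‖b‖ * ‖projCLM U - projCLM V‖ := by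
  classical
  refine ⟨4 * n, by positivity, ?_⟩
  intro k hk1 hk2 U V hU hV
  have hkn : k ≤ n := by omega
  set ε : ℝ := ‖projCLM U - projCLM V‖ with hεdef
  have hε0 : 0 ≤ ε := norm_nonneg _
  -- In both cases we produce an orthonormal basis of U and an orthonormal family in V
  -- with pointwise distance at most 4ε.
  obtain ⟨eU, f, hf, hfV, hD⟩ :
      ∃ (eU : OrthonormalBasis (Fin k) ℝ U) (f : Fin k → EuclideanSpace ℝ (Fin n)),
        Orthonormal ℝ f ∧ (∀ i, f i ∈ V) ∧
        ∀ i, ‖(eU i : EuclideanSpace ℝ (Fin n)) - f i‖ ≤ 4 * ε := by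
    by_cases hsmall : ε < 1 / 2
    · -- small case: use the eigenbasis of `π_U ∘ π_V` restricted to `U`
      set S : ↥U →L[ℝ] ↥U :=
        (U.orthogonalProjectionOnto).comp ((projCLM V).comp U.subtypeL) with hSdef
      have hSapp : ∀ x : ↥U,
          ((S x : EuclideanSpace ℝ (Fin n))) =
            (U.orthogonalProjectionOnto (projCLM V (x : EuclideanSpace ℝ (Fin n))) :
              EuclideanSpace ℝ (Fin n)) := fun x => rfl
      have hSinner : ∀ x y : ↥U,
          ⟪S x, y⟫ = ⟪(x : EuclideanSpace ℝ (Fin n)),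
            projCLM V (y : EuclideanSpace ℝ (Fin n))⟫ := by
        intro x y
        have h1 : ⟪S x, y⟫ =
            ⟪projCLM V (x : EuclideanSpace ℝ (Fin n)), (y : EuclideanSpace ℝ (Fin n))⟫ :=
          U.inner_orthogonalProjectionOnto_eq_of_mem_right y
            (projCLM V (x : EuclideanSpace ℝ (Fin n)))
        rw [h1, projCLM_apply, projCLM_apply]
        exact inner_oPO_left_eq_right V _ _
      have hSsym : (S : ↥U →ₗ[ℝ] ↥U).IsSymmetric := by
        intro x y
        have h1 := hSinner x y
        have h2 := hSinner y x
        have h3 : ⟪x, (S : ↥U →ₗ[ℝ] ↥U) y⟫ = ⟪(S : ↥U →ₗ[ℝ] ↥U) y, x⟫ := real_inner_comm _ _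
        have h4 : ⟪(x : EuclideanSpace ℝ (Fin n)),
            projCLM V (y : EuclideanSpace ℝ (Fin n))⟫ =
            ⟪(y : EuclideanSpace ℝ (Fin n)),
            projCLM V (x : EuclideanSpace ℝ (Fin n))⟫ := by
          rw [projCLM_apply, projCLM_apply, ← inner_oPO_left_eq_right,
            real_inner_comm, ← inner_oPO_left_eq_right]
        show ⟪S x, y⟫ = ⟪x, (S : ↥U →ₗ[ℝ] ↥U) y⟫
        rw [h3, h1, h4]
        exact h2.symm
      let eU : OrthonormalBasis (Fin k) ℝ ↥U := hSsym.eigenvectorBasis hU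
      set μ : Fin k → ℝ := hSsym.eigenvalues hU with hμdef
      have hEig : ∀ i, S (eU i) = μ i • eU i := by
        intro i
        have h := hSsym.apply_eigenvectorBasis hU i
        rw [RCLike.ofReal_real_eq_id] at h
        exact h
      set g : Fin k → EuclideanSpace ℝ (Fin n) :=
        fun i => projCLM V (eU i : EuclideanSpace ℝ (Fin n)) with hgdef
      have hgV : ∀ i, g i ∈ V := fun i => Submodule.coe_mem _
      have heUnorm : ∀ i, ‖(eU i : EuclideanSpace ℝ (Fin n))‖ = 1 := by
        intro i
        have := eU.orthonormal.1 i
        exact this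
      -- the projected vectors are orthogonal, thanks to the eigenbasis property
      have hg_inner : ∀ i j, ⟪g i, g j⟫ =
          μ i * ⟪(eU i : EuclideanSpace ℝ (Fin n)), (eU j : EuclideanSpace ℝ (Fin n))⟫ := by
        intro i j
        have hgiV : (V.orthogonalProjectionOnto (g i) : EuclideanSpace ℝ (Fin n)) = g i :=
          (Submodule.starProjection_eq_self_iff (K := V)).mpr (hgV i)
        have h1 : ⟪g i, g j⟫ = ⟪g i, (eU j : EuclideanSpace ℝ (Fin n))⟫ := by
          calc ⟪g i, g j⟫
              = ⟪g i, (V.orthogonalProjectionOnto (eU j : EuclideanSpace ℝ (Fin n)) :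
                  EuclideanSpace ℝ (Fin n))⟫ := rfl
            _ = ⟪(V.orthogonalProjectionOnto (g i) : EuclideanSpace ℝ (Fin n)),
                  (eU j : EuclideanSpace ℝ (Fin n))⟫ :=
                (inner_oPO_left_eq_right V _ _).symm
            _ = ⟪g i, (eU j : EuclideanSpace ℝ (Fin n))⟫ := by rw [hgiV]
        have hUj : (U.orthogonalProjectionOnto ((eU j : EuclideanSpace ℝ (Fin n))) :
            EuclideanSpace ℝ (Fin n)) = (eU j : EuclideanSpace ℝ (Fin n)) :=
          (Submodule.starProjection_eq_self_iff (K := U)).mpr (Submodule.coe_mem _)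
        have h2 : ⟪g i, (eU j : EuclideanSpace ℝ (Fin n))⟫ =
            ⟪((S (eU i) : ↥U) : EuclideanSpace ℝ (Fin n)),
              (eU j : EuclideanSpace ℝ (Fin n))⟫ := by
          calc ⟪g i, (eU j : EuclideanSpace ℝ (Fin n))⟫
              = ⟪g i, (U.orthogonalProjectionOnto ((eU j : EuclideanSpace ℝ (Fin n))) :
                  EuclideanSpace ℝ (Fin n))⟫ := by rw [hUj]
            _ = ⟪(U.orthogonalProjectionOnto (g i) : EuclideanSpace ℝ (Fin n)),
                  (eU j : EuclideanSpace ℝ (Fin n))⟫ :=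
                (inner_oPO_left_eq_right U _ _).symm
            _ = _ := rfl
        rw [h1, h2, hEig i]
        push_cast
        rw [real_inner_smul_left]
      have hg_close : ∀ i, ‖g i - (eU i : EuclideanSpace ℝ (Fin n))‖ ≤ ε := by
        intro i
        have hUi : projCLM U ((eU i : EuclideanSpace ℝ (Fin n))) =
            (eU i : EuclideanSpace ℝ (Fin n)) := by
          rw [projCLM_apply]
          exact (Submodule.starProjection_eq_self_iff (K := U)).mpr (Submodule.coe_mem _)
        have h1 : g i - (eU i : EuclideanSpace ℝ (Fin n)) =
            (projCLM V - projCLM U) ((eU i : EuclideanSpace ℝ (Fin n))) := by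
          rw [ContinuousLinearMap.sub_apply, hUi]
        rw [h1]
        calc ‖(projCLM V - projCLM U) ((eU i : EuclideanSpace ℝ (Fin n)))‖
            ≤ ‖projCLM V - projCLM U‖ * ‖(eU i : EuclideanSpace ℝ (Fin n))‖ :=
              ContinuousLinearMap.le_opNorm _ _
          _ = ε := by rw [heUnorm i, mul_one, norm_sub_rev]
      have hg_le : ∀ i, ‖g i‖ ≤ 1 := by
        intro i
        calc ‖g i‖ = ‖V.orthogonalProjectionOnto ((eU i : EuclideanSpace ℝ (Fin n)))‖ := rfl
          _ ≤ ‖V.orthogonalProjectionOnto‖ * ‖(eU i : EuclideanSpace ℝ (Fin n))‖ :=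
              ContinuousLinearMap.le_opNorm _ _
          _ ≤ 1 * 1 := by
              refine mul_le_mul V.orthogonalProjectionOnto_norm_le (le_of_eq (heUnorm i))
                (norm_nonneg _) zero_le_one
          _ = 1 := one_mul 1
      have hg_ge : ∀ i, 1 - ε ≤ ‖g i‖ := by
        intro i
        have h1 : ‖(eU i : EuclideanSpace ℝ (Fin n))‖ - ‖g i‖ ≤
            ‖(eU i : EuclideanSpace ℝ (Fin n)) - g i‖ := norm_sub_norm_le _ _
        rw [norm_sub_rev] at h1
        have := hg_close i
        rw [heUnorm i] at h1
        linarith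
      have hg_pos : ∀ i, 0 < ‖g i‖ := fun i => by
        have := hg_ge i; linarith
      set f : Fin k → EuclideanSpace ℝ (Fin n) := fun i => ‖g i‖⁻¹ • g i with hfdef
      have hfV : ∀ i, f i ∈ V := fun i => Submodule.smul_mem _ _ (hgV i)
      have heUij : ∀ i j, i ≠ j →
          ⟪(eU i : EuclideanSpace ℝ (Fin n)), (eU j : EuclideanSpace ℝ (Fin n))⟫ = 0 := by
        intro i j hij
        have := eU.orthonormal.2 hij
        rw [← Submodule.coe_inner]
        exact this
      have hfon : Orthonormal ℝ f := by
        rw [orthonormal_iff_ite]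
        intro i j
        by_cases hij : i = j
        · subst hij
          simp only [f, real_inner_smul_left, real_inner_smul_right, if_pos rfl]
          rw [real_inner_self_eq_norm_sq]
          have hne : ‖g i‖ ≠ 0 := ne_of_gt (hg_pos i)
          field_simp
          simp
        · simp only [f, real_inner_smul_left, real_inner_smul_right, if_neg hij]
          rw [hg_inner i j, heUij i j hij, mul_zero, mul_zero, mul_zero]
      refine ⟨eU, f, hfon, hfV, fun i => ?_⟩
      have h1 : ‖(eU i : EuclideanSpace ℝ (Fin n)) - f i‖ ≤
          ‖(eU i : EuclideanSpace ℝ (Fin n)) - g i‖ + ‖g i - f i‖ := by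
        have := norm_sub_le_norm_sub_add_norm_sub
          ((eU i : EuclideanSpace ℝ (Fin n))) (g i) (f i)
        exact this
      have h2 : ‖(eU i : EuclideanSpace ℝ (Fin n)) - g i‖ ≤ ε := by
        rw [norm_sub_rev]; exact hg_close i
      have h3 : ‖g i - f i‖ ≤ ε := by
        have hgf : g i - f i = (1 - ‖g i‖⁻¹) • g i := by
          rw [sub_smul, one_smul, hfdef]
        rw [hgf, norm_smul, Real.norm_eq_abs]
        have hpos := hg_pos i
        have habs : |1 - ‖g i‖⁻¹| * ‖g i‖ = |‖g i‖ - 1| := by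
          rw [← abs_of_pos hpos, ← abs_mul]
          congr 1
          field_simp
          rw [abs_of_pos hpos]
          ring
        rw [habs, abs_of_nonpos (by linarith [hg_le i])]
        have := hg_ge i
        linarith
      linarith
    · -- large case: any isometry works
      push_neg at hsmall
      let eU : OrthonormalBasis (Fin k) ℝ ↥U :=
        (stdOrthonormalBasis ℝ ↥U).reindex (finCongr hU)
      let eV : OrthonormalBasis (Fin k) ℝ ↥V :=
        (stdOrthonormalBasis ℝ ↥V).reindex (finCongr hV)
      refine ⟨eU, fun i => (eV i : EuclideanSpace ℝ (Fin n)),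
        orthonormal_coe eV.orthonormal, fun i => Submodule.coe_mem _, fun i => ?_⟩
      have h1 : ‖(eU i : EuclideanSpace ℝ (Fin n))‖ = 1 := by
        have := eU.orthonormal.1 i; exact this
      have h2 : ‖(eV i : EuclideanSpace ℝ (Fin n))‖ = 1 := by
        have := eV.orthonormal.1 i; exact this
      calc ‖(eU i : EuclideanSpace ℝ (Fin n)) - (eV i : EuclideanSpace ℝ (Fin n))‖
          ≤ ‖(eU i : EuclideanSpace ℝ (Fin n))‖ + ‖(eV i : EuclideanSpace ℝ (Fin n))‖ :=
            norm_sub_le _ _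
        _ = 2 := by rw [h1, h2]; norm_num
        _ ≤ 4 * ε := by linarith
  have heU : Orthonormal ℝ (fun i => (eU i : EuclideanSpace ℝ (Fin n))) :=
    orthonormal_coe eU.orthonormal
  obtain ⟨R, hmap, hRapp⟩ :=
    aux_exists_isometry k hkn U V hU hV (fun i => (eU i : EuclideanSpace ℝ (Fin n))) f
      heU hf (fun i => Submodule.coe_mem _) hfV
  refine ⟨R, hmap, fun b hb => ?_⟩
  have hbd := aux_bound k U eU f R hRapp (4 * ε) hD b hb
  calc ‖b - R b‖ ≤ k * (4 * ε) * ‖b‖ := hbd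
    _ ≤ 4 * n * ‖b‖ * ε := by
        have hk' : (k : ℝ) ≤ n := by exact_mod_cast hkn
        have h1 : (k : ℝ) * (4 * ε) * ‖b‖ ≤ (n : ℝ) * (4 * ε) * ‖b‖ :=
          mul_le_mul_of_nonneg_right
            (mul_le_mul_of_nonneg_right hk' (by positivity)) (norm_nonneg b)
        have h2 : (n : ℝ) * (4 * ε) * ‖b‖ = 4 * n * ‖b‖ * ε := by ring
        linarith
end

section
/- Let n, k, k' be integers with 1 ≤ k' < k ≤ n−1, let U and V be k-dimensional linear subspaces of ℝⁿ, let C > 0, and let R : ℝⁿ → ℝⁿ be an orthogonal linear map with R(U) = V satisfying ‖x − R(x)‖ ≤ C·‖x‖·‖π_U − π_V‖_op for all x ∈ ℝⁿ. Let r > 0, let a ∈ U^⊥, let X₀ ⊆ U be a k'-dimensional linear subspace, and let b ∈ U ∩ X₀^⊥ with ‖b‖ ≤ r (equivalently, the affine flat X = X₀ + b meets the closed ball B(0,r)). Then there is a constant C' > 0 depending only on n and C such that ‖π_{X₀} − π_{R(X₀)}‖_op + ‖(b + a) − (R(b) + a − π_{R(X₀)}(a))‖ ≤ C'·(r + ‖a‖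 + 1)·‖π_U − π_V‖_op; that is, d_𝒜(R(X) + a, X + a) ≤ C'·(r + ‖a‖ + 1)·‖π_U − π_V‖_op, where X + a is identified with the pair (π_{X₀}, b + a) and R(X) + a with the pair (π_{R(X₀)}, R(b) + a − π_{R(X₀)}(a)). -/
open Set

lemma projCLM_apply_norm_le {n : ℕ} (K : Submodule ℝ (EuclideanSpace ℝ (Fin n)))
    (z : EuclideanSpace ℝ (Fin n)) : ‖projCLM K z‖ ≤ ‖z‖ := by
  have h1 : ‖projCLM K z‖ = ‖K.orthogonalProjectionOnto z‖ := rfl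
  have h2 : ‖K.orthogonalProjectionOnto z‖ ≤ ‖K.orthogonalProjectionOnto‖ * ‖z‖ :=
    (K.orthogonalProjectionOnto).le_opNorm z
  have h3 : ‖K.orthogonalProjectionOnto‖ ≤ 1 := Submodule.orthogonalProjectionOnto_norm_le K
  nlinarith [norm_nonneg z]

/-- **Lemma 2.5.** There is a constant `C' > 0`, depending only on `n` and `C`, with the
following property. Let `1 ≤ k' < k ≤ n - 1`, let `U, V` be `k`-dimensional subspaces of
`ℝⁿ`, and let `R` be an orthogonal map with `R(U) = V` and
`‖x - R(x)‖ ≤ C·‖x‖·‖π_U - π_V‖` for all `x`. Let `r > 0`, `a ∈ U^⊥`, let `X₀ ⊆ U` be a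
`k'`-dimensional subspace and `b ∈ U ∩ X₀^⊥` with `‖b‖ ≤ r`. Then, for the affine flat
`X = X₀ + b`, identifying `X + a` with `(π_{X₀}, b + a)` and `R(X) + a` with
`(π_{R(X₀)}, R(b) + a - π_{R(X₀)}(a))`, one has
`d_𝒜(R(X) + a, X + a) ≤ C'·(r + ‖a‖ + 1)·‖π_U - π_V‖`. -/
theorem dist_rotated_subflat
    (n : ℕ) (C : ℝ) (hC : 0 < C) :
    ∃ C' : ℝ, 0 < C' ∧
      ∀ k k' : ℕ, 1 ≤ k' → k' < k → k ≤ n - 1 →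
        ∀ U V : Submodule ℝ (EuclideanSpace ℝ (Fin n)),
          Module.finrank ℝ U = k → Module.finrank ℝ V = k →
          ∀ R : EuclideanSpace ℝ (Fin n) ≃ₗᵢ[ℝ] EuclideanSpace ℝ (Fin n),
            U.map (R.toLinearEquiv : EuclideanSpace ℝ (Fin n) →ₗ[ℝ] EuclideanSpace ℝ (Fin n)) = V →
            (∀ x : EuclideanSpace ℝ (Fin n),
              ‖x - R x‖ ≤ C * ‖x‖ * ‖projCLM U - projCLM V‖) →
            ∀ r : ℝ, 0 < r →
              ∀ a ∈ Uᗮ,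
                ∀ X₀ : Submodule ℝ (EuclideanSpace ℝ (Fin n)), X₀ ≤ U →
                  Module.finrank ℝ X₀ = k' →
                  ∀ b ∈ U ⊓ X₀ᗮ, ‖b‖ ≤ r →
                    ‖projCLM X₀ - projCLM (X₀.map (R.toLinearEquiv : EuclideanSpace ℝ (Fin n) →ₗ[ℝ] EuclideanSpace ℝ (Fin n)))‖ +
                        ‖(b + a) - (R b + a - projCLM (X₀.map (R.toLinearEquiv : EuclideanSpace ℝ (Fin n) →ₗ[ℝ] EuclideanSpace ℝ (Fin n))) a)‖
                      ≤ C' * (r + ‖a‖ + 1) * ‖projCLM U - projCLM V‖ := by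
  refine ⟨2 * C, by positivity, ?_⟩
  intro k k' _ _ _ U V _ _ R hUV hR r hr a ha X₀ hX₀U _ b hb hbr
  set Y := X₀.map (R.toLinearEquiv : EuclideanSpace ℝ (Fin n) →ₗ[ℝ] EuclideanSpace ℝ (Fin n)) with hY
  set ε := ‖projCLM U - projCLM V‖ with hε
  have hε0 : (0:ℝ) ≤ ε := norm_nonneg _
  have key : ∀ x, ‖projCLM X₀ x - projCLM Y x‖ ≤ 2 * C * ε * ‖x‖ := by
    intro x
    have hmap : projCLM Y x = R ((X₀.orthogonalProjectionOnto (R.symm x) :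
        EuclideanSpace ℝ (Fin n))) := Submodule.starProjection_map_apply R X₀ x
    set y := R.symm x with hy
    have hyx : ‖y‖ = ‖x‖ := R.symm.norm_map x
    have hRy : R y = x := R.apply_symm_apply x
    have h1 : ‖projCLM X₀ x - projCLM X₀ y‖ ≤ C * ‖x‖ * ε := by
      have hxy : ‖x - y‖ ≤ C * ‖x‖ * ε := by
        have h := hR y
        rw [hRy] at h
        calc ‖x - y‖ = ‖y - x‖ := norm_sub_rev _ _
          _ ≤ C * ‖y‖ * ε := h
          _ = C * ‖x‖ * ε := by rw [hyx]
      calc ‖projCLM X₀ x - projCLM X₀ y‖ = ‖projCLM X₀ (x - y)‖ := by rw [map_sub]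
        _ ≤ ‖x - y‖ := projCLM_apply_norm_le X₀ _
        _ ≤ C * ‖x‖ * ε := hxy
    have h2 : ‖projCLM X₀ y - projCLM Y x‖ ≤ C * ‖x‖ * ε := by
      rw [hmap]
      have hz := hR ((X₀.orthogonalProjectionOnto y : EuclideanSpace ℝ (Fin n)))
      have hle : ‖(X₀.orthogonalProjectionOnto y : EuclideanSpace ℝ (Fin n))‖ ≤ ‖x‖ :=
        (projCLM_apply_norm_le X₀ y).trans_eq hyx
      have hcoe : projCLM X₀ y = (X₀.orthogonalProjectionOnto y : EuclideanSpace ℝ (Fin n)) := rfl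
      rw [hcoe]
      calc ‖(X₀.orthogonalProjectionOnto y : EuclideanSpace ℝ (Fin n)) -
              R ((X₀.orthogonalProjectionOnto y : EuclideanSpace ℝ (Fin n)))‖
          ≤ C * ‖(X₀.orthogonalProjectionOnto y : EuclideanSpace ℝ (Fin n))‖ * ε := hz
        _ ≤ C * ‖x‖ * ε :=
            mul_le_mul_of_nonneg_right (mul_le_mul_of_nonneg_left hle hC.le) hε0
    calc ‖projCLM X₀ x - projCLM Y x‖
        ≤ ‖projCLM X₀ x - projCLM X₀ y‖ + ‖projCLM X₀ y - projCLM Y x‖ :=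
          norm_sub_le_norm_sub_add_norm_sub _ _ _
      _ ≤ C * ‖x‖ * ε + C * ‖x‖ * ε := add_le_add h1 h2
      _ = 2 * C * ε * ‖x‖ := by ring
  have hop : ‖projCLM X₀ - projCLM Y‖ ≤ 2 * C * ε := by
    refine ContinuousLinearMap.opNorm_le_bound _ (by positivity) (fun x => ?_)
    simpa using key x
  have haX : a ∈ X₀ᗮ := Submodule.orthogonal_le hX₀U ha
  have hproj0 : projCLM X₀ a = 0 := by
    simp [projCLM, Submodule.orthogonalProjectionOnto_apply_of_mem_orthogonal haX]
  have hYa : ‖projCLM Y a‖ ≤ 2 * C * ε * ‖a‖ := by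
    have h := key a
    rwa [hproj0, zero_sub, norm_neg] at h
  have hbR : ‖b - R b‖ ≤ C * r * ε := by
    have h := hR b
    calc ‖b - R b‖ ≤ C * ‖b‖ * ε := h
      _ ≤ C * r * ε :=
          mul_le_mul_of_nonneg_right (mul_le_mul_of_nonneg_left hbr hC.le) hε0
  have hsecond : ‖(b + a) - (R b + a - projCLM Y a)‖ ≤ C * r * ε + 2 * C * ε * ‖a‖ := by
    have heq : (b + a) - (R b + a - projCLM Y a) = (b - R b) + projCLM Y a := by abel
    rw [heq]
    calc ‖(b - R b) + projCLM Y a‖ ≤ ‖b - R b‖ + ‖projCLM Y a‖ := norm_add_le _ _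
      _ ≤ C * r * ε + 2 * C * ε * ‖a‖ := add_le_add hbR hYa
  have hna : (0:ℝ) ≤ ‖a‖ := norm_nonneg _
  have hfinal := add_le_add hop hsecond
  have hrε : 0 ≤ C * r * ε := mul_nonneg (mul_nonneg hC.le hr.le) hε0
  nlinarith [hfinal, hrε]
end

section
/- Let n ≥ 2 and 1 ≤ k ≤ n−1 be integers, let s ∈ (0,k] and t ∈ (0, k(n−k)] be reals, and let F ⊆ ℝⁿ be an (s,t;k)-spread Furstenberg set. Then for every ε > 0 with ε < min{s, t} there exists i ∈ ℕ such that the bounded Borel set F ∩ B(0,i) (where B(0,i) is the closed ball of radius i about the origin) is an (s−ε, t−ε; k)-spread Furstenberg set. -/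
open Set MeasureTheory

/-- `F ⊆ ℝⁿ` is an `(s,t;k)`-spread Furstenberg set. -/
def IsSpreadFurstenberg (n k : ℕ) (s t : ℝ)
    (F : Set (EuclideanSpace ℝ (Fin n))) : Prop :=
  MeasurableSet F ∧
  ∃ 𝔓 : Set (Submodule ℝ (EuclideanSpace ℝ (Fin n))),
    𝔓.Nonempty ∧
    (∀ P ∈ 𝔓, Module.finrank ℝ P = k) ∧
    ENNReal.ofReal t ≤ dimH (projCLM '' 𝔓) ∧
    ∀ P ∈ 𝔓, ∃ a : EuclideanSpace ℝ (Fin n),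
      ENNReal.ofReal s ≤ dimH (F ∩ ((· + a) '' (P : Set (EuclideanSpace ℝ (Fin n)))))

/-- **Reduction to bounded sets.** If `F ⊆ ℝⁿ` is an `(s,t;k)`-spread Furstenberg set, then
for every `0 < ε < min{s,t}` there exists `i ∈ ℕ` such that the bounded Borel set
`F ∩ B(0,i)` is an `(s-ε, t-ε; k)`-spread Furstenberg set. -/
theorem spread_furstenberg_bounded_reduction
    (n k : ℕ) (hn : 2 ≤ n) (hk₁ : 1 ≤ k) (hk₂ : k + 1 ≤ n)
    (s t : ℝ) (hs₁ : 0 < s) (hs₂ : s ≤ k)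
    (ht₁ : 0 < t) (ht₂ : t ≤ (k : ℝ) * ((n : ℝ) - k))
    (F : Set (EuclideanSpace ℝ (Fin n)))
    (hF : IsSpreadFurstenberg n k s t F) :
    ∀ ε : ℝ, 0 < ε → ε < min s t →
      ∃ i : ℕ, IsSpreadFurstenberg n k (s - ε) (t - ε)
        (F ∩ Metric.closedBall (0 : EuclideanSpace ℝ (Fin n)) (i : ℝ)) := by
  intro ε hε hεlt
  obtain ⟨hεs, hεt⟩ := lt_min_iff.mp hεlt
  obtain ⟨hFmeas, 𝔓, h𝔓ne, hrank, hdimt, hlines⟩ := hF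
  set B : ℕ → Set (EuclideanSpace ℝ (Fin n)) :=
    fun i => Metric.closedBall (0 : EuclideanSpace ℝ (Fin n)) (i : ℝ) with hB
  set Q : ℕ → Set (Submodule ℝ (EuclideanSpace ℝ (Fin n))) := fun i =>
    {P ∈ 𝔓 | ∃ a : EuclideanSpace ℝ (Fin n),
      ENNReal.ofReal (s - ε) ≤ dimH ((F ∩ B i) ∩ ((· + a) '' (P : Set (EuclideanSpace ℝ (Fin n)))))}
    with hQ
  have hsub : 𝔓 ⊆ ⋃ i, Q i := by
    intro P hP
    obtain ⟨a, ha⟩ := hlines P hP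
    have hunion : F ∩ ((· + a) '' (P : Set (EuclideanSpace ℝ (Fin n))))
        = ⋃ i, (F ∩ B i) ∩ ((· + a) '' (P : Set (EuclideanSpace ℝ (Fin n)))) := by
      ext x
      simp only [mem_iUnion, mem_inter_iff, hB, Metric.mem_closedBall, dist_zero_right]
      constructor
      · rintro ⟨hxF, hxl⟩
        obtain ⟨i, hi⟩ := exists_nat_ge ‖x‖
        exact ⟨i, ⟨hxF, hi⟩, hxl⟩
      · rintro ⟨i, ⟨hxF, _⟩, hxl⟩
        exact ⟨hxF, hxl⟩
    rw [hunion, dimH_iUnion] at ha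
    have hlt : ENNReal.ofReal (s - ε) < ⨆ i, dimH ((F ∩ B i) ∩ ((· + a) '' (P : Set (EuclideanSpace ℝ (Fin n))))) :=
      lt_of_lt_of_le ((ENNReal.ofReal_lt_ofReal_iff hs₁).mpr (by linarith)) ha
    obtain ⟨i, hi⟩ := lt_iSup_iff.mp hlt
    exact mem_iUnion.mpr ⟨i, hP, a, hi.le⟩
  have himg : projCLM '' 𝔓 ⊆ ⋃ i, projCLM '' Q i := by
    rw [← image_iUnion]; exact image_mono hsub
  have hlt2 : ENNReal.ofReal (t - ε) < ⨆ i, dimH (projCLM '' Q i) := by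
    calc ENNReal.ofReal (t - ε) < ENNReal.ofReal t :=
          (ENNReal.ofReal_lt_ofReal_iff ht₁).mpr (by linarith)
      _ ≤ dimH (projCLM '' 𝔓) := hdimt
      _ ≤ dimH (⋃ i, projCLM '' Q i) := dimH_mono himg
      _ = ⨆ i, dimH (projCLM '' Q i) := dimH_iUnion _
  obtain ⟨i, hi⟩ := lt_iSup_iff.mp hlt2
  refine ⟨i, hFmeas.inter measurableSet_closedBall, Q i, ?_, ?_, hi.le, ?_⟩
  · rcases (projCLM '' Q i).eq_empty_or_nonempty with h | h
    · rw [h, dimH_empty] at hi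
      exact absurd hi (by simp [ENNReal.ofReal_pos.mpr (by linarith : (0:ℝ) < t - ε)])
    · obtain ⟨_, P, hP, _⟩ := h
      exact ⟨P, hP⟩
  · exact fun P hP => hrank P hP.1
  · exact fun P hP => hP.2
end

section
/- Let n ≥ 4 be an integer and let s be a real number with 1 < s and ⌈s⌉ ≤ n−2. Let H ⊆ ℝⁿ be a linear subspace of dimension ⌈s⌉ and let X ⊆ H be a Borel set with dim_H X = s. Then the family 𝒫 of all (n−1)-dimensional linear subspaces of ℝⁿ containing H satisfies dim_H{π_P : P ∈ 𝒫} = n − 1 − ⌈s⌉ (in the operator-norm metric), and consequently X is an (s, n−1−⌈s⌉; n−1)-spread Furstenberg set whose Hausdorff dimension equals s = 1 + s − (n−1−t)/⌈s⌉ with t = n−1−⌈s⌉; i.e., the lower bound for (s,t;n−1)-spread Furstenberg sets is attained. -/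
open Set MeasureTheory

section Helpers


open Module
open scoped RealInnerProductSpace ENNReal
set_option linter.unusedSectionVars false
set_option maxHeartbeats 1000000


variable {E : Type*} [NormedAddCommGroup E] [InnerProductSpace ℝ E] [FiniteDimensional ℝ E]

noncomputable def prG (U : Submodule ℝ E) : E →L[ℝ] E :=
  U.subtypeL.comp (U.orthogonalProjectionOnto)

noncomputable def rk1 (v : E) : E →L[ℝ] E := (innerSL ℝ v).smulRight v

noncomputable def Psi (e w : E) : E →L[ℝ] E :=
  ContinuousLinearMap.id ℝ E - ((1:ℝ) + ‖w‖^2)⁻¹ • rk1 (e + w)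

lemma rk1_apply (v x : E) : rk1 v x = ⟪v, x⟫ • v := rfl

lemma Psi_apply (e w x : E) :
    Psi e w x = x - ((1:ℝ) + ‖w‖^2)⁻¹ • (⟪e + w, x⟫ • (e + w)) := by
  simp [Psi, rk1, ContinuousLinearMap.smul_apply, inner_add_left, add_smul, smul_add]

lemma Psi_eq_prG (e w : E) (he : ‖e‖ = 1) (hw : ⟪e, w⟫ = 0) :
    Psi e w = prG ((ℝ ∙ (e + w))ᗮ) := by
  have hn : ‖e + w‖^2 = 1 + ‖w‖^2 := by
    rw [norm_add_sq_real, he, hw]; ring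
  ext x
  have h1 : prG ((ℝ ∙ (e + w))ᗮ) x = x - (ℝ ∙ (e + w)).starProjection x := by
    simp [prG, Submodule.orthogonalProjectionOnto_orthogonal]
  rw [h1, Submodule.starProjection_singleton, Psi_apply, hn]
  rw [div_eq_inv_mul, mul_smul]
  norm_cast

lemma contDiff_Psi (e : E) : ContDiff ℝ 1 (Psi e) := by
  have h1 : ContDiff ℝ 1 (fun w : E => rk1 (e + w)) := by
    have hB : IsBoundedBilinearMap ℝ
        (fun p : (E →L[ℝ] ℝ) × E => (ContinuousLinearMap.smulRightL ℝ E E) p.1 p.2) :=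
      (ContinuousLinearMap.smulRightL ℝ E E).isBoundedBilinearMap
    have h2 : ContDiff ℝ 1 (fun w : E => ((innerSL ℝ (e + w) : E →L[ℝ] ℝ), e + w)) :=
      (((innerSL ℝ (E := E)).contDiff).comp (contDiff_const.add contDiff_id)).prodMk
        (contDiff_const.add contDiff_id)
    exact (hB.contDiff.of_le le_top).comp h2
  have h3 : ContDiff ℝ 1 (fun w : E => ((1:ℝ) + ‖w‖^2)⁻¹) := by
    refine (contDiff_const.add (contDiff_norm_sq ℝ)).inv fun w => ?_
    positivity
  exact contDiff_const.sub (h3.smul h1)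

-- membership lemma
lemma mem_P_of {n : ℕ} (H : Submodule ℝ (EuclideanSpace ℝ (Fin n)))
    (v : EuclideanSpace ℝ (Fin n)) (hv : v ∈ Hᗮ) (hv0 : v ≠ 0) :
    Module.finrank ℝ ((ℝ ∙ v)ᗮ) = n - 1 ∧ H ≤ (ℝ ∙ v)ᗮ := by
  constructor
  · have h1 := Submodule.finrank_add_finrank_orthogonal (K := (ℝ ∙ v))
    rw [finrank_span_singleton hv0, finrank_euclideanSpace_fin] at h1
    omega
  · refine le_trans (Submodule.le_orthogonal_orthogonal H) (Submodule.orthogonal_le ?_)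
    rwa [Submodule.span_singleton_le_iff_mem]

-- every hyperplane containing H comes from a unit normal in Hᗮ
lemma exists_unit_normal {n : ℕ} (H P : Submodule ℝ (EuclideanSpace ℝ (Fin n)))
    (hn : 1 ≤ n) (hP : Module.finrank ℝ P = n - 1) (hHP : H ≤ P) :
    ∃ v : EuclideanSpace ℝ (Fin n), v ∈ Hᗮ ∧ ‖v‖ = 1 ∧ P = (ℝ ∙ v)ᗮ := by
  have h1 := Submodule.finrank_add_finrank_orthogonal (K := P)
  rw [hP, finrank_euclideanSpace_fin] at h1
  have h2 : Module.finrank ℝ (Pᗮ) = 1 := by omega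
  have h3 : Pᗮ ≠ ⊥ := by
    intro h
    rw [h, finrank_bot] at h2; omega
  obtain ⟨v0, hv0P, hv00⟩ := Submodule.exists_mem_ne_zero_of_ne_bot h3
  have hspan : (ℝ ∙ v0) = Pᗮ := by
    apply Submodule.eq_of_le_of_finrank_eq
    · rwa [Submodule.span_singleton_le_iff_mem]
    · rw [finrank_span_singleton hv00, h2]
  refine ⟨‖v0‖⁻¹ • v0, ?_, ?_, ?_⟩
  · have : v0 ∈ Hᗮ := (Submodule.orthogonal_le hHP) hv0P
    exact Submodule.smul_mem _ _ this
  · rw [norm_smul]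
    simp [norm_inv, abs_of_nonneg (norm_nonneg v0), inv_mul_cancel₀ (norm_ne_zero_iff.mpr hv00)]
  · have hu : IsUnit (‖v0‖⁻¹) := by
      simp [isUnit_iff_ne_zero, inv_ne_zero, norm_ne_zero_iff.mpr hv00]
    have : (ℝ ∙ (‖v0‖⁻¹ • v0)) = Pᗮ := by
      rw [Submodule.span_singleton_smul_eq hu, hspan]
    rw [this, Submodule.orthogonal_orthogonal]

-- dimH of a submodule coerced to a set
lemma dimH_submodule (W : Submodule ℝ E) :
    dimH (W : Set E) = (finrank ℝ W : ℝ≥0∞) := by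
  have hiso : Isometry (Subtype.val : W → E) := fun x y => rfl
  calc dimH (W : Set E) = dimH (Subtype.val '' (univ : Set W)) := by
        rw [image_univ, Subtype.range_coe]
    _ = dimH (univ : Set W) := hiso.dimH_image _
    _ = (finrank ℝ W : ℝ≥0∞) := Real.dimH_univ_eq_finrank W

lemma Psi_sub_self (e w : E) (he : ‖e‖ = 1) (hw : ⟪e, w⟫ = 0) :
    e - Psi e w e = ((1:ℝ) + ‖w‖^2)⁻¹ • (e + w) := by
  rw [Psi_apply]
  have h1 : ⟪e + w, e⟫ = 1 := by
    have hw' : ⟪w, e⟫ = 0 := by rw [real_inner_comm]; exact hw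
    rw [inner_add_left, real_inner_self_eq_norm_sq, he, hw']
    norm_num
  rw [h1, one_smul]
  abel

lemma inner_Psi_self (e w : E) (he : ‖e‖ = 1) (hw : ⟪e, w⟫ = 0) :
    ⟪e, e - Psi e w e⟫ = ((1:ℝ) + ‖w‖^2)⁻¹ := by
  rw [Psi_sub_self e w he hw, real_inner_smul_right, inner_add_right,
    real_inner_self_eq_norm_sq, he, hw]
  norm_num

lemma dimH_proj (n : ℕ) (H : Submodule ℝ (EuclideanSpace ℝ (Fin n)))
    (hd : 2 ≤ finrank ℝ (Hᗮ)) :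
    dimH (prG '' {P : Submodule ℝ (EuclideanSpace ℝ (Fin n)) |
        finrank ℝ P = n - 1 ∧ H ≤ P})
      = ((finrank ℝ (Hᗮ) - 1 : ℕ) : ℝ≥0∞) := by
  classical
  set EE := EuclideanSpace ℝ (Fin n)
  set K : Submodule ℝ EE := Hᗮ with hKdef
  set d : ℕ := finrank ℝ K with hdd
  set b : OrthonormalBasis (Fin d) ℝ K := stdOrthonormalBasis ℝ K with hbdef
  have hbo := b.orthonormal
  have hbnorm : ∀ i, ‖b i‖ = 1 := hbo.1
  have hn1 : 1 ≤ n := by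
    have h := Submodule.finrank_le K
    rw [finrank_euclideanSpace_fin] at h; omega
  have hd0 : 0 < d := by omega
  -- the family
  set 𝔓 : Set (Submodule ℝ EE) := {P | finrank ℝ P = n - 1 ∧ H ≤ P} with h𝔓
  -- orthogonal complements of basis vectors inside K
  have hYrank : ∀ i : Fin d, finrank ℝ ((ℝ ∙ (b i))ᗮ : Submodule ℝ K) = d - 1 := by
    intro i
    have h1 := Submodule.finrank_add_finrank_orthogonal (K := (ℝ ∙ (b i)))
    have hbne : b i ≠ 0 := fun h => by simpa [h] using hbnorm i
    rw [finrank_span_singleton hbne] at h1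
    omega
  -- upper bound
  have upper : dimH (prG '' 𝔓) ≤ ((d - 1 : ℕ) : ℝ≥0∞) := by
    set A : Fin d → Set EE := fun i =>
      (fun y : K => (y : EE)) '' (((ℝ ∙ (b i))ᗮ : Submodule ℝ K) : Set K) with hA
    have hcov : prG '' 𝔓 ⊆ ⋃ i, Psi ((b i : K) : EE) '' A i := by
      rintro - ⟨P, ⟨hP1, hP2⟩, rfl⟩
      obtain ⟨v, hvK, hvnorm, rfl⟩ := exists_unit_normal H P hn1 hP1 hP2
      set vK : K := ⟨v, hvK⟩ with hvKdef
      have hvK1 : ‖vK‖ = 1 := hvnorm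
      have hsum : ∑ i, ⟪vK, b i⟫ * ⟪b i, vK⟫ = 1 := by
        rw [b.sum_inner_mul_inner vK vK, real_inner_self_eq_norm_sq, hvK1]; norm_num
      have hex : ∃ i, ⟪b i, vK⟫ ≠ 0 := by
        by_contra hco
        push_neg at hco
        rw [Finset.sum_eq_zero (fun i _ => by rw [hco i, mul_zero])] at hsum
        norm_num at hsum
      obtain ⟨i, hc⟩ := hex
      set c : ℝ := ⟪b i, vK⟫ with hcdef
      set wK : K := c⁻¹ • vK - b i with hwKdef
      have hwmem : wK ∈ ((ℝ ∙ (b i))ᗮ : Submodule ℝ K) := by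
        rw [Submodule.mem_orthogonal_singleton_iff_inner_right]
        rw [hwKdef, inner_sub_right, real_inner_smul_right,
          real_inner_self_eq_norm_sq, hbnorm i, ← hcdef, inv_mul_cancel₀ hc]
        norm_num
      have hiw : ⟪((b i : K) : EE), ((wK : K) : EE)⟫ = 0 := by
        have := Submodule.mem_orthogonal_singleton_iff_inner_right.mp hwmem
        exact this
      have hsum' : ((b i : K) : EE) + (wK : EE) = c⁻¹ • v := by
        rw [hwKdef]
        push_cast
        abel
      have hPeq : (ℝ ∙ v)ᗮ = (ℝ ∙ (((b i : K) : EE) + (wK : EE)))ᗮ := by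
        rw [hsum', Submodule.span_singleton_smul_eq (isUnit_iff_ne_zero.mpr (inv_ne_zero hc))]
      refine mem_iUnion.mpr ⟨i, ⟨(wK : EE), ⟨wK, hwmem, rfl⟩, ?_⟩⟩
      exact (Psi_eq_prG ((b i : K) : EE) (wK : EE) (hbnorm i) hiw).trans
        (congrArg prG hPeq.symm)
    refine le_trans (dimH_mono hcov) ?_
    rw [dimH_iUnion]
    refine iSup_le fun i => ?_
    have h1 : dimH (Psi ((b i : K) : EE) '' A i) ≤ dimH (A i) :=
      ContDiffOn.dimH_image_le ((contDiff_Psi _).contDiffOn) convex_univ (subset_univ _)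
    have h2 : dimH (A i) = ((d - 1 : ℕ) : ℝ≥0∞) := by
      have hiso : Isometry (fun y : K => (y : EE)) := fun x y => rfl
      rw [hA]
      rw [hiso.dimH_image, dimH_submodule, hYrank i]
    exact h1.trans_eq h2
  -- lower bound
  have lower : ((d - 1 : ℕ) : ℝ≥0∞) ≤ dimH (prG '' 𝔓) := by
    set i0 : Fin d := ⟨0, hd0⟩ with hi0
    set e : EE := ((b i0 : K) : EE) with hedef
    have he1 : ‖e‖ = 1 := hbnorm i0
    have heK : e ∈ K := SetLike.coe_mem _
    set Y : Submodule ℝ K := (ℝ ∙ (b i0))ᗮ with hYdef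
    set j : Y → EE := fun y => ((y : K) : EE) with hj
    have hjiso : Isometry j := fun x y => rfl
    set B : Set EE := j '' Metric.ball 0 1 with hB
    have hBprop : ∀ w ∈ B, w ∈ K ∧ ⟪e, w⟫ = 0 := by
      rintro - ⟨y, -, rfl⟩
      refine ⟨SetLike.coe_mem _, ?_⟩
      have h1 : ((y : K) : K) ∈ (ℝ ∙ (b i0))ᗮ := SetLike.coe_mem y
      have h2 : ⟪b i0, (y : K)⟫ = 0 :=
        Submodule.mem_orthogonal_singleton_iff_inner_right.mp h1
      rw [Submodule.coe_inner] at h2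
      exact h2
    have hdimB : dimH B = ((d - 1 : ℕ) : ℝ≥0∞) := by
      rw [hB, hjiso.dimH_image, Real.dimH_of_mem_nhds (Metric.ball_mem_nhds _ one_pos),
        hYrank i0]
    -- B maps into the family
    have hBsub : Psi e '' B ⊆ prG '' 𝔓 := by
      rintro - ⟨w, hw, rfl⟩
      obtain ⟨hwK, hew⟩ := hBprop w hw
      have hne : e + w ≠ 0 := by
        intro h
        have : ⟪e, e + w⟫ = 0 := by rw [h, inner_zero_right]
        rw [inner_add_right, real_inner_self_eq_norm_sq, he1, hew] at this
        norm_num at this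
      refine ⟨(ℝ ∙ (e + w))ᗮ, mem_P_of H (e + w) (K.add_mem heK hwK) hne, ?_⟩
      exact (Psi_eq_prG e w he1 hew).symm
    -- retraction
    set S : Set (EE →L[ℝ] EE) := {T | ⟪e, T e⟫ < 1} with hS
    have hSconv : Convex ℝ S := by
      have hlin : IsLinearMap ℝ (fun T : EE →L[ℝ] EE => ⟪e, T e⟫) := by
        constructor
        · intro T T'; rw [ContinuousLinearMap.add_apply, inner_add_right]
        · intro a T
          rw [ContinuousLinearMap.smul_apply, real_inner_smul_right, smul_eq_mul]
      exact convex_halfSpace_lt hlin 1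
    set ρ : (EE →L[ℝ] EE) → EE := fun T => (⟪e, e - T e⟫)⁻¹ • (e - T e) - e with hρ
    have happly : ContDiff ℝ 1 (fun T : EE →L[ℝ] EE => e - T e) :=
      contDiff_const.sub (ContinuousLinearMap.apply ℝ EE e).contDiff
    have hSne : ∀ T ∈ S, ⟪e, e - T e⟫ ≠ 0 := by
      intro T hT
      rw [inner_sub_right, real_inner_self_eq_norm_sq, he1]
      have : ⟪e, T e⟫ < 1 := hT
      norm_num
      linarith
    have hρCD : ContDiffOn ℝ 1 ρ S := by
      refine ContDiffOn.sub ?_ contDiffOn_const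
      refine ContDiffOn.fun_smul ?_ happly.contDiffOn
      exact (((innerSL ℝ e).contDiff.comp happly).contDiffOn).inv hSne
    have hPsiS : Psi e '' B ⊆ S := by
      rintro - ⟨w, hw, rfl⟩
      obtain ⟨-, hew⟩ := hBprop w hw
      have h1 := inner_Psi_self e w he1 hew
      have h2 : (0:ℝ) < ((1:ℝ) + ‖w‖^2)⁻¹ := by positivity
      have h3 : ⟪e, Psi e w e⟫ = 1 - ((1:ℝ) + ‖w‖^2)⁻¹ := by
        have := inner_sub_right (𝕜 := ℝ) e e (Psi e w e)
        rw [real_inner_self_eq_norm_sq, he1] at this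
        rw [h1] at this
        linarith [this]
      show ⟪e, Psi e w e⟫ < 1
      rw [h3]; linarith
    have hretr : ∀ w ∈ B, ρ (Psi e w) = w := by
      intro w hw
      obtain ⟨-, hew⟩ := hBprop w hw
      have hpos : (1:ℝ) + ‖w‖^2 ≠ 0 := by positivity
      rw [hρ]
      simp only
      rw [inner_Psi_self e w he1 hew, Psi_sub_self e w he1 hew, inv_inv, smul_smul,
        mul_inv_cancel₀ hpos, one_smul]
      abel
    have himg : ρ '' (Psi e '' B) = B := by
      rw [image_image]
      rw [image_congr hretr]
      exact image_id B
    calc ((d - 1 : ℕ) : ℝ≥0∞) = dimH B := hdimB.symm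
      _ = dimH (ρ '' (Psi e '' B)) := by rw [himg]
      _ ≤ dimH (Psi e '' B) := ContDiffOn.dimH_image_le hρCD hSconv hPsiS
      _ ≤ dimH (prG '' 𝔓) := dimH_mono hBsub
  exact le_antisymm upper lower


end Helpers

open Module in
open scoped RealInnerProductSpace ENNReal in
/-- **Sharp example for hyperplanes (end of Section 4).** Let `n ≥ 4`, `1 < s`,
`⌈s⌉ ≤ n - 2`, let `H ⊆ ℝⁿ` be a linear subspace of dimension `⌈s⌉`, and let `X ⊆ H` be a
Borel set with `dim_H X = s`. Then the family `𝔓` of all `(n-1)`-dimensional linear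
subspaces containing `H` satisfies `dim_H {π_P : P ∈ 𝔓} = n - 1 - ⌈s⌉`, hence `X` is an
`(s, n-1-⌈s⌉; n-1)`-spread Furstenberg set whose Hausdorff dimension equals
`s = 1 + s - (n-1-t)/⌈s⌉` with `t = n - 1 - ⌈s⌉`. -/
theorem sharp_example_hyperplanes
    (n : ℕ) (hn : 4 ≤ n)
    (s : ℝ) (hs₁ : 1 < s) (hs₂ : (⌈s⌉ : ℤ) ≤ (n : ℤ) - 2)
    (H : Submodule ℝ (EuclideanSpace ℝ (Fin n)))
    (hH : Module.finrank ℝ H = (⌈s⌉ : ℤ).toNat)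
    (X : Set (EuclideanSpace ℝ (Fin n))) (hXmeas : MeasurableSet X)
    (hXH : X ⊆ (H : Set (EuclideanSpace ℝ (Fin n))))
    (hXdim : dimH X = ENNReal.ofReal s) :
    dimH (projCLM '' {P : Submodule ℝ (EuclideanSpace ℝ (Fin n)) |
        Module.finrank ℝ P = n - 1 ∧ H ≤ P})
      = ENNReal.ofReal ((n : ℝ) - 1 - (⌈s⌉ : ℝ)) ∧
    IsSpreadFurstenberg n (n - 1) s ((n : ℝ) - 1 - (⌈s⌉ : ℝ)) X ∧
    dimH X = ENNReal.ofReal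
      (1 + s - ((n : ℝ) - 1 - ((n : ℝ) - 1 - (⌈s⌉ : ℝ))) / (⌈s⌉ : ℝ)) := by
  have hceil : (1:ℤ) < ⌈s⌉ := Int.lt_ceil.mpr (by exact_mod_cast hs₁)
  set m : ℕ := (⌈s⌉ : ℤ).toNat with hmdef
  have hm : (m : ℤ) = ⌈s⌉ := Int.toNat_of_nonneg (by omega)
  have hm2 : 2 ≤ m := by omega
  have hmn : m + 2 ≤ n := by omega
  have hfr : finrank ℝ H = m := hH
  have hKr : finrank ℝ (Hᗮ) = n - m := by
    have h1 := Submodule.finrank_add_finrank_orthogonal (K := H)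
    rw [hfr, finrank_euclideanSpace_fin] at h1
    omega
  have hd : 2 ≤ finrank ℝ (Hᗮ) := by omega
  have hcast : ENNReal.ofReal ((n : ℝ) - 1 - (⌈s⌉ : ℝ)) = ((n - m - 1 : ℕ) : ℝ≥0∞) := by
    have h1 : ((⌈s⌉ : ℤ) : ℝ) = (m : ℝ) := by exact_mod_cast congrArg (Int.cast : ℤ → ℝ) hm.symm
    have h2 : ((n - m - 1 : ℕ) : ℝ) = (n : ℝ) - (m : ℝ) - 1 := by
      rw [show (n - m - 1 : ℕ) = n - (m + 1) from by omega, Nat.cast_sub (by omega)]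
      push_cast; ring
    rw [h1, show (n : ℝ) - 1 - (m : ℝ) = ((n - m - 1 : ℕ) : ℝ) from by rw [h2]; ring]
    exact ENNReal.ofReal_natCast _
  have hg1 : dimH (projCLM '' {P : Submodule ℝ (EuclideanSpace ℝ (Fin n)) |
        Module.finrank ℝ P = n - 1 ∧ H ≤ P})
      = ENNReal.ofReal ((n : ℝ) - 1 - (⌈s⌉ : ℝ)) := by
    have h := dimH_proj n H hd
    rw [hKr] at h
    calc dimH (projCLM '' {P : Submodule ℝ (EuclideanSpace ℝ (Fin n)) |
            Module.finrank ℝ P = n - 1 ∧ H ≤ P})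
        = dimH (prG '' {P : Submodule ℝ (EuclideanSpace ℝ (Fin n)) |
            finrank ℝ P = n - 1 ∧ H ≤ P}) := rfl
      _ = ((n - m - 1 : ℕ) : ℝ≥0∞) := h
      _ = ENNReal.ofReal ((n : ℝ) - 1 - (⌈s⌉ : ℝ)) := hcast.symm
  refine ⟨hg1, ⟨hXmeas, {P : Submodule ℝ (EuclideanSpace ℝ (Fin n)) |
      Module.finrank ℝ P = n - 1 ∧ H ≤ P}, ?_, fun P hP => hP.1, hg1.ge, ?_⟩, ?_⟩
  · -- nonempty
    have hne : Hᗮ ≠ ⊥ := by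
      intro h
      rw [h, finrank_bot] at hKr; omega
    obtain ⟨v, hv, hv0⟩ := Submodule.exists_mem_ne_zero_of_ne_bot hne
    exact ⟨(ℝ ∙ v)ᗮ, mem_P_of H v hv hv0⟩
  · -- each plane contains a copy of X
    intro P hP
    refine ⟨0, ?_⟩
    have h1 : (· + (0 : EuclideanSpace ℝ (Fin n))) '' (P : Set (EuclideanSpace ℝ (Fin n)))
        = (P : Set (EuclideanSpace ℝ (Fin n))) := by simp
    rw [h1, inter_eq_self_of_subset_left (fun x hx => hP.2 (hXH hx)), hXdim]
  · -- the dimension formula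
    rw [hXdim]
    congr 1
    have hc : ((⌈s⌉ : ℤ) : ℝ) ≠ 0 := by
      have : (1:ℝ) < ((⌈s⌉ : ℤ) : ℝ) := by exact_mod_cast hceil
      linarith
    rw [show ((n : ℝ) - 1 - ((n : ℝ) - 1 - ((⌈s⌉ : ℤ) : ℝ))) = ((⌈s⌉ : ℤ) : ℝ) from by ring,
      div_self hc]
    ring
end
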